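/- Fix an integer n ≥ 2 and natural numbers w and m. The set of n-ary operator monomials of weight w and multiplicity m is finite, and its cardinality N_n(w,m) satisfies (w+1)·N_n(w,m) = C(w+1, m+1) · C(w + (w−m)(n−2) + 1, m), where C(·,·) denotes the binomial coefficient. -/

import Mathlib

mutual
/-- An atom of an `n`-ary operator monomial: either the indeterminate symbol `∗`
or `L(M)` for an operator monomial `M`. -/
inductive OpAtom (n : ℕ) : Type
  | star : OpAtom n
  | op : OpMon n → OpAtom n

/-- A vector of `k` atoms. -/
inductive OpAtomVec (n : ℕ) : ℕ → Type
  | nil : OpAtomVec n 0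
  | cons : {k : ℕ} → OpAtom n → OpAtomVec n k → OpAtomVec n (k + 1)

/-- An `n`-ary operator monomial (in flattened normal form with respect to `n`-ary
associativity): a nonempty list of atoms whose length is congruent to `1` modulo `n-1`. -/
inductive OpMon (n : ℕ) : Type
  | mk : (k : ℕ) → 1 ≤ k → k % (n - 1) = 1 % (n - 1) → OpAtomVec n k → OpMon n
end

mutual
/-- Weight (total number of operations) of an atom. -/
def OpAtom.weight {n : ℕ} : OpAtom n → ℕ
  | .star => 0
  | .op m => 1 + m.weight

/-- Sum of the weights of a vector of atoms. -/
def OpAtomVec.weight {n : ℕ} : {k : ℕ} → OpAtomVec n k → ℕ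
  | _, .nil => 0
  | _, .cons a v => a.weight + v.weight

/-- Weight of an operator monomial `[A_1, …, A_k]`: the number `(k-1)/(n-1)` of `n`-ary
products needed to form a product of `k` factors, plus the weights of the atoms. -/
def OpMon.weight {n : ℕ} : OpMon n → ℕ
  | .mk k _ _ v => (k - 1) / (n - 1) + v.weight
end

mutual
/-- Multiplicity (number of occurrences of the operator symbol `L`) of an atom. -/
def OpAtom.mult {n : ℕ} : OpAtom n → ℕ
  | .star => 0
  | .op m => 1 + m.mult

/-- Total multiplicity of a vector of atoms. -/
def OpAtomVec.mult {n : ℕ} : {k : ℕ} → OpAtomVec n k → ℕ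
  | _, .nil => 0
  | _, .cons a v => a.mult + v.mult

/-- Multiplicity of an operator monomial. -/
def OpMon.mult {n : ℕ} : OpMon n → ℕ
  | .mk _ _ _ v => v.mult
end

mutual
/-- Degree (number of occurrences of the indeterminate `∗`) of an atom. -/
def OpAtom.degree {n : ℕ} : OpAtom n → ℕ
  | .star => 1
  | .op m => m.degree

/-- Total degree of a vector of atoms. -/
def OpAtomVec.degree {n : ℕ} : {k : ℕ} → OpAtomVec n k → ℕ
  | _, .nil => 0
  | _, .cons a v => a.degree + v.degree

/-- Degree of an operator monomial. -/
def OpMon.degree {n : ℕ} : OpMon n → ℕ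
  | .mk _ _ _ v => v.degree
end

namespace OpCount

/-- Sum of counts of `true` over a code. -/
def sumT (c : List (List Bool)) : ℕ := (c.map fun r => r.count true).sum

/-- Sum of `(len - 1)/(n-1)` over a code. -/
def sumA (n : ℕ) (c : List (List Bool)) : ℕ := (c.map fun r => (r.length - 1) / (n - 1)).sum

@[simp] theorem sumT_nil : sumT [] = 0 := rfl
@[simp] theorem sumT_cons (r : List Bool) (c : List (List Bool)) :
    sumT (r :: c) = r.count true + sumT c := rfl
@[simp] theorem sumT_append (c₁ c₂ : List (List Bool)) :
    sumT (c₁ ++ c₂) = sumT c₁ + sumT c₂ := by simp [sumT]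
@[simp] theorem sumA_nil (n : ℕ) : sumA n [] = 0 := rfl
@[simp] theorem sumA_cons (n : ℕ) (r : List Bool) (c : List (List Bool)) :
    sumA n (r :: c) = (r.length - 1) / (n - 1) + sumA n c := rfl
@[simp] theorem sumA_append (n : ℕ) (c₁ c₂ : List (List Bool)) :
    sumA n (c₁ ++ c₂) = sumA n c₁ + sumA n c₂ := by simp [sumA]

/-- A valid row: nonempty, length ≡ 1 mod (n-1). -/
def ValidRow (n : ℕ) (r : List Bool) : Prop :=
  1 ≤ r.length ∧ r.length % (n - 1) = 1 % (n - 1)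

/-- `IsF n j c` : the code `c` is the preorder code of a forest of `j` trees. -/
inductive IsF (n : ℕ) : ℕ → List (List Bool) → Prop
  | nil : IsF n 0 []
  | cons (r : List Bool) (c : List (List Bool)) (j : ℕ) :
      ValidRow n r → IsF n (r.count true + j) c → IsF n (j + 1) (r :: c)

end OpCount

open OpCount

def OpAtom.isOp {n : ℕ} : OpAtom n → Bool
  | .star => false
  | .op _ => true

def OpAtomVec.row {n : ℕ} : {k : ℕ} → OpAtomVec n k → List Bool
  | _, .nil => []
  | _, .cons a v => a.isOp :: v.row

@[simp] theorem OpAtomVec.row_length {n : ℕ} : ∀ {k : ℕ} (v : OpAtomVec n k), v.row.length = k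
  | _, .nil => rfl
  | _, .cons a v => by simp [OpAtomVec.row, row_length v]

mutual
def OpAtom.code {n : ℕ} : OpAtom n → List (List Bool)
  | .star => []
  | .op m => m.code
def OpAtomVec.code {n : ℕ} : {k : ℕ} → OpAtomVec n k → List (List Bool)
  | _, .nil => []
  | _, .cons a v => a.code ++ v.code
def OpMon.code {n : ℕ} : OpMon n → List (List Bool)
  | .mk _ _ _ v => v.row :: v.code
end

mutual
theorem OpAtom.code_length {n : ℕ} : ∀ a : OpAtom n, a.code.length = a.mult
  | .star => rfl
  | .op m => by
      have h := OpMon.code_length m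
      simp only [OpAtom.code, OpAtom.mult]
      omega
theorem OpAtomVec.code_length {n : ℕ} : ∀ {k : ℕ} (v : OpAtomVec n k),
    v.code.length = v.mult
  | _, .nil => rfl
  | _, .cons a v => by
      have h1 := OpAtom.code_length a
      have h2 := OpAtomVec.code_length v
      simp only [OpAtomVec.code, OpAtomVec.mult, List.length_append]
      omega
theorem OpMon.code_length {n : ℕ} : ∀ M : OpMon n, M.code.length = M.mult + 1
  | .mk k h1 h2 v => by
      have h := OpAtomVec.code_length v
      simp only [OpMon.code, OpMon.mult, List.length_cons]
      omega
end

mutual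
theorem OpAtom.code_sumT {n : ℕ} : ∀ a : OpAtom n, sumT a.code + a.isOp.toNat = a.mult
  | .star => rfl
  | .op m => by
      have h := OpMon.code_sumT m
      simp only [OpAtom.code, OpAtom.mult, OpAtom.isOp, Bool.toNat_true]
      omega
theorem OpAtomVec.code_sumT {n : ℕ} : ∀ {k : ℕ} (v : OpAtomVec n k),
    sumT v.code + v.row.count true = v.mult
  | _, .nil => rfl
  | _, .cons a v => by
      have h1 := OpAtom.code_sumT a
      have h2 := OpAtomVec.code_sumT v
      have hc : (a.isOp :: v.row).count true = v.row.count true + a.isOp.toNat := by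
        cases a.isOp <;> simp [List.count_cons]
      simp only [OpAtomVec.code, OpAtomVec.mult, OpAtomVec.row, sumT_append, hc]
      omega
theorem OpMon.code_sumT {n : ℕ} : ∀ M : OpMon n, sumT M.code = M.mult
  | .mk k h1 h2 v => by
      have h := OpAtomVec.code_sumT v
      simp only [OpMon.code, OpMon.mult, sumT_cons]
      omega
end

mutual
theorem OpAtom.code_sumA {n : ℕ} : ∀ a : OpAtom n, sumA n a.code + a.mult = a.weight
  | .star => rfl
  | .op m => by
      have h := OpMon.code_sumA m
      simp only [OpAtom.code, OpAtom.mult, OpAtom.weight]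
      omega
theorem OpAtomVec.code_sumA {n : ℕ} : ∀ {k : ℕ} (v : OpAtomVec n k),
    sumA n v.code + v.mult = v.weight
  | _, .nil => rfl
  | _, .cons a v => by
      have h1 := OpAtom.code_sumA a
      have h2 := OpAtomVec.code_sumA v
      simp only [OpAtomVec.code, OpAtomVec.mult, OpAtomVec.weight, sumA_append]
      omega
theorem OpMon.code_sumA {n : ℕ} : ∀ M : OpMon n, sumA n M.code + M.mult = M.weight
  | .mk k h1 h2 v => by
      have h := OpAtomVec.code_sumA v
      have hr := OpAtomVec.row_length v
      simp only [OpMon.code, OpMon.mult, OpMon.weight, sumA_cons, hr]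
      generalize (k - 1) / (n - 1) = x
      omega
end

mutual
theorem OpAtom.mult_le_weight {n : ℕ} : ∀ a : OpAtom n, a.mult ≤ a.weight
  | .star => le_refl _
  | .op m => by
      have h := OpMon.mult_le_weight m
      simp only [OpAtom.mult, OpAtom.weight]
      omega
theorem OpAtomVec.mult_le_weight {n : ℕ} : ∀ {k : ℕ} (v : OpAtomVec n k),
    v.mult ≤ v.weight
  | _, .nil => le_refl _
  | _, .cons a v => by
      have h1 := OpAtom.mult_le_weight a
      have h2 := OpAtomVec.mult_le_weight v
      simp only [OpAtomVec.mult, OpAtomVec.weight]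
      omega
theorem OpMon.mult_le_weight {n : ℕ} : ∀ M : OpMon n, M.mult ≤ M.weight
  | .mk k h1 h2 v => by
      have h := OpAtomVec.mult_le_weight v
      simp only [OpMon.mult, OpMon.weight]
      exact le_trans h (Nat.le_add_left _ _)
end

mutual
theorem OpAtom.code_valid {n : ℕ} : ∀ a : OpAtom n, ∀ r ∈ a.code, ValidRow n r
  | .star => by intro r hr; simp [OpAtom.code] at hr
  | .op m => by
      intro r hr
      exact OpMon.code_valid m r hr
theorem OpAtomVec.code_valid {n : ℕ} : ∀ {k : ℕ} (v : OpAtomVec n k),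
    ∀ r ∈ v.code, ValidRow n r
  | _, .nil => by intro r hr; simp [OpAtomVec.code] at hr
  | _, .cons a v => by
      intro r hr
      simp only [OpAtomVec.code, List.mem_append] at hr
      rcases hr with hr | hr
      · exact OpAtom.code_valid a r hr
      · exact OpAtomVec.code_valid v r hr
theorem OpMon.code_valid {n : ℕ} : ∀ M : OpMon n, ∀ r ∈ M.code, ValidRow n r
  | .mk k h1 h2 v => by
      intro r hr
      simp only [OpMon.code, List.mem_cons] at hr
      rcases hr with rfl | hr
      · exact ⟨by rw [OpAtomVec.row_length]; exact h1, by rw [OpAtomVec.row_length]; exact h2⟩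
      · exact OpAtomVec.code_valid v r hr
end

mutual
theorem OpAtom.code_isF {n : ℕ} : ∀ (a : OpAtom n) {j : ℕ} {c : List (List Bool)},
    IsF n j c → IsF n (a.isOp.toNat + j) (a.code ++ c)
  | .star, j, c => fun h => by simpa [OpAtom.code, OpAtom.isOp] using h
  | .op m, j, c => fun h => by
      have h' := OpMon.code_isF m h
      simpa [OpAtom.isOp, OpAtom.code, Nat.add_comm] using h'
theorem OpAtomVec.code_isF {n : ℕ} : ∀ {k : ℕ} (v : OpAtomVec n k) {j : ℕ}
    {c : List (List Bool)}, IsF n j c → IsF n (v.row.count true + j) (v.code ++ c)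
  | _, .nil, j, c => fun h => by simpa [OpAtomVec.code, OpAtomVec.row] using h
  | _, .cons a v, j, c => fun h => by
      have h' := OpAtom.code_isF a (OpAtomVec.code_isF v h)
      have hc : (a.isOp :: v.row).count true + j = a.isOp.toNat + (v.row.count true + j) := by
        cases a.isOp
        · simp [List.count_cons]
        · simp [List.count_cons]; omega
      rw [OpAtomVec.code, OpAtomVec.row, List.append_assoc, hc]
      exact h'
theorem OpMon.code_isF {n : ℕ} : ∀ (M : OpMon n) {j : ℕ} {c : List (List Bool)},
    IsF n j c → IsF n (j + 1) (M.code ++ c)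
  | .mk k h1 h2 v, j, c => fun h => by
      rw [OpMon.code, List.cons_append]
      refine IsF.cons _ _ _ ⟨?_, ?_⟩ (OpAtomVec.code_isF v h)
      · rw [OpAtomVec.row_length]; exact h1
      · rw [OpAtomVec.row_length]; exact h2
end

theorem OpMon.code_isF_one {n : ℕ} (M : OpMon n) : IsF n 1 M.code := by
  have h := OpMon.code_isF M (IsF.nil (n := n))
  simpa using h

/-! ### Parsing codes back into monomials -/

def codeL {n : ℕ} : List (OpMon n) → List (List Bool)
  | [] => []
  | M :: Ms => M.code ++ codeL Ms

@[simp] theorem codeL_nil {n : ℕ} : codeL ([] : List (OpMon n)) = [] := rfl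
@[simp] theorem codeL_cons {n : ℕ} (M : OpMon n) (Ms : List (OpMon n)) :
    codeL (M :: Ms) = M.code ++ codeL Ms := rfl

theorem codeL_append {n : ℕ} (Ms₁ Ms₂ : List (OpMon n)) :
    codeL (Ms₁ ++ Ms₂) = codeL Ms₁ ++ codeL Ms₂ := by
  induction Ms₁ with
  | nil => rfl
  | cons M Ms ih => simp [ih]

instance (n : ℕ) : Inhabited (OpMon n) :=
  ⟨OpMon.mk 1 le_rfl rfl (.cons .star .nil)⟩

def mkVec {n : ℕ} : (r : List Bool) → List (OpMon n) → OpAtomVec n r.length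
  | [], _ => .nil
  | false :: r, ms => .cons .star (mkVec r ms)
  | true :: r, [] => .cons .star (mkVec r [])
  | true :: r, M :: ms => .cons (.op M) (mkVec r ms)

theorem mkVec_row {n : ℕ} : ∀ (r : List Bool) (ms : List (OpMon n)),
    ms.length = r.count true → (mkVec r ms).row = r
  | [], _, _ => rfl
  | false :: r, ms, h => by
      have h' : ms.length = r.count true := by
        simpa [List.count_cons] using h
      simp [mkVec, OpAtomVec.row, OpAtom.isOp, mkVec_row r ms h']
  | true :: r, [], h => by
      simp [List.count_cons] at h
  | true :: r, M :: ms, h => by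
      have h' : ms.length = r.count true := by
        simp [List.count_cons] at h; omega
      simp [mkVec, OpAtomVec.row, OpAtom.isOp, mkVec_row r ms h']

theorem mkVec_code {n : ℕ} : ∀ (r : List Bool) (ms : List (OpMon n)),
    ms.length = r.count true → (mkVec r ms).code = codeL ms
  | [], ms, h => by
      have : ms = [] := by
        simpa using h
      subst this; rfl
  | false :: r, ms, h => by
      have h' : ms.length = r.count true := by simpa [List.count_cons] using h
      simp [mkVec, OpAtomVec.code, OpAtom.code, mkVec_code r ms h']
  | true :: r, [], h => by simp [List.count_cons] at h
  | true :: r, M :: ms, h => by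
      have h' : ms.length = r.count true := by simp [List.count_cons] at h; omega
      simp [mkVec, OpAtomVec.code, OpAtom.code, mkVec_code r ms h']

theorem IsF.parse {n : ℕ} {j : ℕ} {c : List (List Bool)} (h : IsF n j c) :
    ∃ Ms : List (OpMon n), Ms.length = j ∧ codeL Ms = c := by
  induction h with
  | nil => exact ⟨[], rfl, rfl⟩
  | cons r c j hr hf ih =>
    obtain ⟨Ms, hlen, hcode⟩ := ih
    have htle : r.count true ≤ Ms.length := by omega
    have htake : (Ms.take (r.count true)).length = r.count true := by
      simp [List.length_take]; omega
    refine ⟨(OpMon.mk r.length hr.1 hr.2 (mkVec r (Ms.take (r.count true)))) :: Ms.drop (r.count true), ?_, ?_⟩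
    · simp [List.length_drop]; omega
    · simp only [codeL_cons, OpMon.code, mkVec_row _ _ htake, mkVec_code _ _ htake]
      rw [List.cons_append, ← codeL_append, List.take_append_drop, hcode]

mutual
theorem OpAtom.code_inj {n : ℕ} : ∀ (a a' : OpAtom n), a.isOp = a'.isOp →
    ∀ (l l' : List (List Bool)), a.code ++ l = a'.code ++ l' → a = a' ∧ l = l'
  | .star, .star, _, l, l', h => ⟨rfl, h⟩
  | .op m, .op m', _, l, l', h => by
      obtain ⟨h1, h2⟩ := OpMon.code_inj m m' l l' h
      exact ⟨by rw [h1], h2⟩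
  | .star, .op _, h, _, _, _ => by simp [OpAtom.isOp] at h
  | .op _, .star, h, _, _, _ => by simp [OpAtom.isOp] at h
theorem OpAtomVec.code_inj {n : ℕ} : ∀ {k : ℕ} (v v' : OpAtomVec n k), v.row = v'.row →
    ∀ (l l' : List (List Bool)), v.code ++ l = v'.code ++ l' → v = v' ∧ l = l'
  | _, .nil, .nil, _, l, l', h => ⟨rfl, h⟩
  | _, .cons a v, .cons a' v', hrow, l, l', h => by
      rw [OpAtomVec.row, OpAtomVec.row] at hrow
      have hop : a.isOp = a'.isOp := by injection hrow
      have hrow' : v.row = v'.row := by injection hrow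
      rw [OpAtomVec.code, OpAtomVec.code, List.append_assoc, List.append_assoc] at h
      obtain ⟨ha, h2⟩ := OpAtom.code_inj a a' hop _ _ h
      obtain ⟨hv, h3⟩ := OpAtomVec.code_inj v v' hrow' _ _ h2
      subst ha; subst hv; exact ⟨rfl, h3⟩
theorem OpMon.code_inj {n : ℕ} : ∀ (M M' : OpMon n),
    ∀ (l l' : List (List Bool)), M.code ++ l = M'.code ++ l' → M = M' ∧ l = l'
  | .mk k h1 h2 v, .mk k' h1' h2' v', l, l', h => by
      rw [OpMon.code, OpMon.code, List.cons_append, List.cons_append] at h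
      have hrow : v.row = v'.row := by injection h
      have h2' : v.code ++ l = v'.code ++ l' := by injection h
      have hk : k = k' := by
        rw [← OpAtomVec.row_length v, ← OpAtomVec.row_length v', hrow]
      subst hk
      obtain ⟨hv, hl⟩ := OpAtomVec.code_inj v v' hrow l l' h2'
      subst hv
      exact ⟨rfl, hl⟩
end

namespace OpCount

/-! ### Characterization of forest codes by prefix sums, and the cycle lemma -/

theorem isF_iff {n : ℕ} (c : List (List Bool)) (j : ℕ) :
    IsF n j c ↔ ((∀ r ∈ c, ValidRow n r) ∧ c.length = sumT c + j ∧
      ∀ i < c.length, i < sumT (c.take i) + j) := by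
  induction c generalizing j with
  | nil =>
    constructor
    · intro h
      cases h
      simp
    · rintro ⟨-, h, -⟩
      simp only [List.length_nil, sumT_nil, Nat.zero_add] at h
      obtain rfl : j = 0 := h.symm
      exact IsF.nil
  | cons r c ih =>
    constructor
    · intro h
      have hinv : ∃ j', j = j' + 1 ∧ ValidRow n r ∧ IsF n (r.count true + j') c := by
        cases h with
        | cons _ _ j' hr hf => exact ⟨j', rfl, hr, hf⟩
      obtain ⟨j', rfl, hr, hf⟩ := hinv
      obtain ⟨hv, hlen, hpre⟩ := (ih _).1 hf
      refine ⟨?_, ?_, ?_⟩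
      · intro x hx
        rcases List.mem_cons.mp hx with rfl | hx
        · exact hr
        · exact hv x hx
      · simp only [List.length_cons, sumT_cons]; omega
      · intro i hi
        cases i with
        | zero => simp
        | succ i =>
          have hi' : i < c.length := by simpa using hi
          have := hpre i hi'
          simp only [List.take_succ_cons, sumT_cons]
          omega
    · rintro ⟨hv, hlen, hpre⟩
      have hj : 1 ≤ j := by
        have := hpre 0 (by simp)
        simp at this; omega
      obtain ⟨j', rfl⟩ : ∃ j', j = j' + 1 := ⟨j - 1, by omega⟩
      refine IsF.cons r c j' (hv r (by simp)) ?_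
      refine (ih _).2 ⟨fun x hx => hv x (by simp [hx]), ?_, ?_⟩
      · simp only [List.length_cons, sumT_cons] at hlen; omega
      · intro i hi
        have := hpre (i + 1) (by simpa using hi)
        simp only [List.take_succ_cons, sumT_cons] at this
        omega

/-- Prefix sums of `trues`. -/
def psum (l : List (List Bool)) (i : ℕ) : ℕ := sumT (l.take i)

@[simp] theorem psum_zero (l : List (List Bool)) : psum l 0 = 0 := rfl

theorem psum_add (l : List (List Bool)) (i t : ℕ) :
    psum l (i + t) = psum l i + sumT ((l.drop i).take t) := by
  rw [psum, psum, List.take_add, sumT_append]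

theorem psum_all (l : List (List Bool)) {k : ℕ} (h : l.length ≤ k) :
    psum l k = sumT l := by
  rw [psum, List.take_of_length_le h]

theorem rot_take_low (l : List (List Bool)) {i t : ℕ} (hi : i ≤ l.length)
    (ht : t ≤ l.length - i) :
    sumT ((l.rotate i).take t) + psum l i = psum l (i + t) := by
  rw [List.rotate_eq_drop_append_take hi, List.take_append]
  have h0 : t - (l.drop i).length = 0 := by
    simp only [List.length_drop]; omega
  rw [h0, List.take_zero, List.append_nil, psum_add]
  omega

theorem rot_take_high (l : List (List Bool)) {i t : ℕ} (hi : i ≤ l.length)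
    (h1 : l.length - i ≤ t) (h2 : t ≤ l.length) :
    sumT ((l.rotate i).take t) + psum l i = sumT l + psum l (t - (l.length - i)) := by
  rw [List.rotate_eq_drop_append_take hi, List.take_append]
  rw [List.take_of_length_le (by simp only [List.length_drop]; omega), sumT_append]
  have hlen : (l.drop i).length = l.length - i := by simp
  rw [hlen, List.take_take]
  have hmin : (t - (l.length - i)) ⊓ i = t - (l.length - i) := by omega
  rw [hmin]
  have hsplit : sumT (l.take i) + sumT (l.drop i) = sumT l := by
    rw [← sumT_append, List.take_append_drop]
  simp only [psum]
  omega

theorem rotate_isF_iff {n : ℕ} (l : List (List Bool)) (hval : ∀ r ∈ l, ValidRow n r)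
    (hsum : sumT l + 1 = l.length) {i : ℕ} (hi : i < l.length) :
    IsF n 1 (l.rotate i) ↔
      ((∀ k, i ≤ k → k ≤ l.length → (i = 0 → k < l.length) →
          psum l i + k ≤ psum l k + i) ∧
       (∀ r, 1 ≤ r → r < i → psum l i + r + 1 ≤ psum l r + i)) := by
  have hperm := List.rotate_perm l i
  have hlenrot : (l.rotate i).length = l.length := List.length_rotate l i
  have hsumrot : sumT (l.rotate i) = sumT l :=
    List.Perm.sum_eq (hperm.map (fun r => r.count true))
  rw [isF_iff]
  constructor
  · rintro ⟨-, -, hpre⟩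
    constructor
    · intro k hik hkle hk0
      have ht : k - i < l.length := by
        rcases Nat.eq_zero_or_pos i with h0 | h0
        · have := hk0 h0; omega
        · omega
      have hp := hpre (k - i) (by rw [hlenrot]; exact ht)
      have hlow := rot_take_low l (le_of_lt hi) (t := k - i) (by omega)
      rw [show i + (k - i) = k by omega] at hlow
      omega
    · intro r hr1 hri
      have ht : r + (l.length - i) < l.length := by omega
      have hp := hpre (r + (l.length - i)) (by rw [hlenrot]; exact ht)
      have hhigh := rot_take_high l (le_of_lt hi)
        (by omega : l.length - i ≤ r + (l.length - i)) (by omega)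
      rw [show r + (l.length - i) - (l.length - i) = r by omega] at hhigh
      omega
  · rintro ⟨hA, hB⟩
    refine ⟨fun r hr => hval r (hperm.mem_iff.mp hr), ?_, ?_⟩
    · rw [hlenrot, hsumrot]; omega
    · intro t htlen
      rw [hlenrot] at htlen
      by_cases hcase : t ≤ l.length - i
      · have hlow := rot_take_low l (le_of_lt hi) hcase
        have hk := hA (i + t) (by omega) (by omega) (fun h0 => by omega)
        omega
      · push_neg at hcase
        have hr1 : 1 ≤ t - (l.length - i) := by omega
        have hri : t - (l.length - i) < i := by omega
        have hhigh := rot_take_high l (i := i) (t := t) (le_of_lt hi) (by omega) (by omega)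
        have hb := hB (t - (l.length - i)) hr1 hri
        omega

theorem cycle_lemma {n : ℕ} (l : List (List Bool)) (hval : ∀ r ∈ l, ValidRow n r)
    (hsum : sumT l + 1 = l.length) :
    ∃! i : ℕ, i < l.length ∧ IsF n 1 (l.rotate i) := by
  classical
  have hlen1 : 1 ≤ l.length := by omega
  have hp0 : psum l 0 = 0 := rfl
  have hplen : psum l l.length + 1 = l.length := by
    rw [psum_all l (le_refl _)]; exact hsum
  obtain ⟨b, hbmem, hbmin⟩ := Finset.exists_min_image (Finset.range (l.length + 1))
    (fun k => (psum l k : ℤ) - k) ⟨0, by simp⟩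
  have hPex : ∃ i, i ≤ l.length ∧ ∀ k, k ≤ l.length → psum l i + k ≤ psum l k + i := by
    refine ⟨b, by have := Finset.mem_range.mp hbmem; omega, fun k hk => ?_⟩
    have := hbmin k (Finset.mem_range.mpr (by omega))
    push_cast at this
    omega
  set i0 := Nat.find hPex with hi0def
  have hP0 : i0 ≤ l.length ∧ ∀ k, k ≤ l.length → psum l i0 + k ≤ psum l k + i0 :=
    Nat.find_spec hPex
  have hmin : ∀ r, r < i0 →
      ¬(r ≤ l.length ∧ ∀ k, k ≤ l.length → psum l r + k ≤ psum l k + r) :=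
    fun r hr => Nat.find_min hPex hr
  have hi0pos : 1 ≤ i0 := by
    rcases Nat.eq_zero_or_pos i0 with h0 | h0
    · exfalso
      have := hP0.2 l.length (le_refl _)
      rw [h0] at this
      simp only [hp0] at this
      omega
    · exact h0
  have hstrict : ∀ r, 1 ≤ r → r < i0 → psum l i0 + r + 1 ≤ psum l r + i0 := by
    intro r h1 h2
    have hne := hmin r h2
    have hle : psum l i0 + r ≤ psum l r + i0 := hP0.2 r (by omega)
    by_contra hcon
    push_neg at hcon
    apply hne
    refine ⟨by omega, fun k hk => ?_⟩
    have := hP0.2 k hk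
    omega
  have hPvalid : ∀ j, 1 ≤ j → j < l.length →
      (∀ k, j ≤ k → k ≤ l.length → (j = 0 → k < l.length) →
        psum l j + k ≤ psum l k + j) →
      (∀ r, 1 ≤ r → r < j → psum l j + r + 1 ≤ psum l r + j) →
      (j ≤ l.length ∧ ∀ k, k ≤ l.length → psum l j + k ≤ psum l k + j) := by
    intro j hj1 hjlen hA hB
    refine ⟨by omega, fun k hk => ?_⟩
    rcases le_or_gt j k with h | h
    · exact hA k h hk (fun h0 => by omega)
    · rcases Nat.eq_zero_or_pos k with rfl | hk1
      · have := hA l.length (by omega) (le_refl _) (fun h0 => by omega)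
        simp only [hp0]
        omega
      · have := hB k hk1 h
        omega
  by_cases hcase : i0 = l.length
  · refine ⟨0, ⟨by omega, ?_⟩, ?_⟩
    · rw [rotate_isF_iff l hval hsum (by omega)]
      refine ⟨?_, fun r h1 h2 => by omega⟩
      intro k hk0 hklen hklt
      have hklt' := hklt rfl
      rcases Nat.eq_zero_or_pos k with rfl | hk1
      · omega
      · have h1 := hstrict k hk1 (by omega)
        rw [hcase] at h1
        simp only [hp0]
        omega
    · rintro j ⟨hjlen, hjF⟩
      by_contra hj0
      have hj1 : 1 ≤ j := by omega
      rw [rotate_isF_iff l hval hsum hjlen] at hjF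
      obtain ⟨hA, hB⟩ := hjF
      exact (hmin j (by omega)) (hPvalid j hj1 hjlen hA hB)
  · have hi0len : i0 < l.length := by
      rcases lt_or_eq_of_le hP0.1 with h | h
      · exact h
      · exact absurd h hcase
    refine ⟨i0, ⟨hi0len, ?_⟩, ?_⟩
    · rw [rotate_isF_iff l hval hsum hi0len]
      exact ⟨fun k hik hklen _ => hP0.2 k hklen, hstrict⟩
    · rintro j ⟨hjlen, hjF⟩
      rw [rotate_isF_iff l hval hsum hjlen] at hjF
      obtain ⟨hA, hB⟩ := hjF
      rcases Nat.eq_zero_or_pos j with rfl | hj1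
      · exfalso
        have h1 := hP0.2 l.length (le_refl _)
        have h2 := hA i0 (by omega) (by omega) (fun _ => hi0len)
        simp only [hp0] at h2
        omega
      · have hPj := hPvalid j hj1 hjlen hA hB
        have hij : i0 ≤ j := Nat.find_min' hPex hPj
        rcases eq_or_lt_of_le hij with h | h
        · exact h.symm
        · exfalso
          have hb := hB i0 hi0pos h
          have := hP0.2 j (by omega)
          omega

end OpCount

namespace OpCount

/-! ### Counting codes -/

theorem count_ofFn : ∀ {k : ℕ} (f : Fin k → Bool),
    (List.ofFn f).count true = (Finset.univ.filter fun i => f i = true).card := by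
  intro k
  induction k with
  | zero => intro f; simp
  | succ k ih =>
    intro f
    rw [List.ofFn_succ, List.count_cons, ih]
    rw [Finset.card_filter, Finset.card_filter, Fin.sum_univ_succ]
    cases h : f 0 <;> simp [h, Nat.add_comm]

theorem ofFn_get_cast {α : Type*} (r : List α) {k : ℕ} (h : k = r.length) :
    List.ofFn (fun i : Fin k => r.get (Fin.cast h i)) = r := by
  subst h
  exact List.ofFn_get r

/-- The number of boolean lists of a given length with a given number of `true`s. -/
theorem card_row (k c : ℕ) :
    Finite {r : List Bool // r.length = k ∧ r.count true = c} ∧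
    Nat.card {r : List Bool // r.length = k ∧ r.count true = c} = k.choose c := by
  have E : {r : List Bool // r.length = k ∧ r.count true = c} ≃
      {s : Finset (Fin k) // s.card = c} :=
    { toFun := fun r => ⟨Finset.univ.filter fun i => r.1.get (Fin.cast r.2.1.symm i) = true, by
        rcases r with ⟨r, hlen, hcount⟩
        dsimp only
        rw [← count_ofFn, ofFn_get_cast]
        exact hcount⟩
      invFun := fun s => ⟨List.ofFn (fun i => i ∈ s.1), by simp, by
        rcases s with ⟨s, hs⟩
        dsimp only
        rw [count_ofFn]; refine Eq.trans ?_ hs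
        congr 1
        ext i
        simp⟩
      left_inv := by
        rintro ⟨r, hlen, hcount⟩
        apply Subtype.ext
        dsimp only
        apply List.ext_get (by simp [hlen])
        intro i h1 h2
        simp [List.get_ofFn]
      right_inv := by
        rintro ⟨s, hs⟩
        apply Subtype.ext
        dsimp only
        ext j
        simp [List.get_ofFn] }
  constructor
  · exact Finite.of_equiv _ E.symm
  · rw [Nat.card_congr E, Nat.card_eq_fintype_card, Fintype.card_finset_len,
      Fintype.card_fin]

theorem nat_card_sigma {ι : Type*} [Fintype ι] (f : ι → Type*) [∀ i, Finite (f i)] :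
    Nat.card ((i : ι) × f i) = ∑ i, Nat.card (f i) := by
  letI := fun i => Fintype.ofFinite (f i)
  rw [Nat.card_eq_fintype_card, Fintype.card_sigma]
  simp [Nat.card_eq_fintype_card]

theorem hockey (q p : ℕ) :
    ∑ j ∈ Finset.range (p + 1), (j + q - 1).choose j = (p + q).choose p := by
  cases q with
  | zero =>
    induction p with
    | zero => simp
    | succ p ih =>
      rw [Finset.sum_range_succ, ih]
      have h0 : (p + 1 + 0 - 1).choose (p + 1) = 0 :=
        Nat.choose_eq_zero_of_lt (by omega)
      simp [h0, Nat.choose_self]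
  | succ q =>
    induction p with
    | zero => simp
    | succ p ih =>
      rw [Finset.sum_range_succ, ih]
      rw [show p + 1 + (q + 1) - 1 = p + q + 1 by omega,
        show p + 1 + (q + 1) = (p + q + 1) + 1 by omega,
        show p + (q + 1) = p + q + 1 by omega,
        Nat.choose_succ_succ (p + q + 1) p]

theorem vandermonde_range (x y s : ℕ) :
    ∑ c ∈ Finset.range (s + 1), x.choose c * y.choose (s - c) = (x + y).choose s := by
  rw [Nat.add_choose_eq, Finset.Nat.sum_antidiagonal_eq_sum_range_succ_mk]

/-- Valid rows have length `1 + (n-1)*a`. -/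
theorem validRow_len {n : ℕ} (hn : 2 ≤ n) {r : List Bool} (h : ValidRow n r) :
    r.length = 1 + (n - 1) * ((r.length - 1) / (n - 1)) := by
  obtain ⟨h1, h2⟩ := h
  have hd : (n - 1) ∣ (r.length - 1) := (Nat.modEq_iff_dvd' h1).mp h2.symm
  obtain ⟨d, hd⟩ := hd
  have hq : (r.length - 1) / (n - 1) = d := by
    rw [hd]; exact Nat.mul_div_cancel_left d (by omega)
  rw [hq]; omega

/-- The codes with given number of rows, total trues, and total `a`-sum. -/
def CodesT (n q s p : ℕ) : Type :=
  {c : List (List Bool) // c.length = q ∧ (∀ r ∈ c, ValidRow n r) ∧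
    sumT c = s ∧ sumA n c = p}

/-- Decomposition of a code of length `q+1` as first row plus rest. -/
def SigT (n q s p : ℕ) : Type :=
  (x : Fin (s + 1) × Fin (p + 1)) ×
    ({r : List Bool // r.length = 1 + (n - 1) * (x.2 : ℕ) ∧ r.count true = (x.1 : ℕ)} ×
      CodesT n q (s - x.1) (p - x.2))

def consCode {n q s p : ℕ} (hn : 2 ≤ n) (x : SigT n q s p) : CodesT n (q + 1) s p :=
  ⟨x.2.1.1 :: x.2.2.1, by
    obtain ⟨⟨c0, a0⟩, ⟨⟨r, hr1, hr2⟩, ⟨cs, hcs1, hcs2, hcs3, hcs4⟩⟩⟩ := x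
    dsimp only at *
    refine ⟨by simp [hcs1], ?_, ?_, ?_⟩
    · intro y hy
      rcases List.mem_cons.mp hy with rfl | hy
      · refine ⟨by omega, ?_⟩
        rw [hr1]
        exact Nat.add_mul_mod_self_left 1 (n - 1) (a0 : ℕ)
      · exact hcs2 y hy
    · rw [sumT_cons, hr2, hcs3]
      have := c0.isLt
      omega
    · rw [sumA_cons, hcs4, hr1]
      simp only [Nat.add_sub_cancel_left]
      rw [Nat.mul_div_cancel_left _ (by omega : 0 < n - 1)]
      have := a0.isLt
      omega⟩

theorem codesT_card {n : ℕ} (hn : 2 ≤ n) :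
    ∀ q s p : ℕ, Finite (CodesT n q s p) ∧
      Nat.card (CodesT n q s p) =
        (p + q - 1).choose p * (q + (n - 1) * p).choose s := by
  intro q
  induction q with
  | zero =>
    intro s p
    by_cases h : s = 0 ∧ p = 0
    · obtain ⟨rfl, rfl⟩ := h
      haveI : Unique (CodesT n 0 0 0) :=
        { default := ⟨[], rfl, by simp, rfl, rfl⟩
          uniq := fun x => Subtype.ext (List.length_eq_zero_iff.mp x.2.1) }
      refine ⟨inferInstance, ?_⟩
      simp [Nat.card_unique]
    · haveI : IsEmpty (CodesT n 0 s p) := by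
        constructor
        rintro ⟨c, hc1, -, hc3, hc4⟩
        obtain rfl : c = [] := List.length_eq_zero_iff.mp hc1
        simp only [sumT_nil, sumA_nil] at hc3 hc4
        exact h ⟨hc3.symm, hc4.symm⟩
      refine ⟨Finite.of_subsingleton, ?_⟩
      rw [Nat.card_of_isEmpty]
      rcases Nat.eq_zero_or_pos p with rfl | hp
      · rcases Nat.eq_zero_or_pos s with rfl | hs
        · exact absurd ⟨rfl, rfl⟩ h
        · have h0 : (0 + (n - 1) * 0).choose s = 0 := by
            have : (0 + (n - 1) * 0) = 0 := by ring
            rw [this]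
            exact Nat.choose_eq_zero_of_lt hs
          rw [h0]
          omega
      · rw [Nat.choose_eq_zero_of_lt (by omega : p + 0 - 1 < p)]
        omega
  | succ q ih =>
    intro s p
    haveI hfin : ∀ x : Fin (s + 1) × Fin (p + 1),
        Finite ({r : List Bool // r.length = 1 + (n - 1) * (x.2 : ℕ) ∧
          r.count true = (x.1 : ℕ)} × CodesT n q (s - x.1) (p - x.2)) := by
      intro x
      haveI := (card_row (1 + (n - 1) * (x.2 : ℕ)) (x.1 : ℕ)).1
      haveI := (ih (s - x.1) (p - x.2)).1
      infer_instance
    have hbij : Function.Bijective (consCode (n := n) (q := q) (s := s) (p := p) hn) := by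
      constructor
      · rintro ⟨⟨c0, a0⟩, ⟨⟨r, hr1, hr2⟩, ⟨cs, hcs⟩⟩⟩
          ⟨⟨c0', a0'⟩, ⟨⟨r', hr1', hr2'⟩, ⟨cs', hcs'⟩⟩⟩ heq
        have h := congrArg Subtype.val heq
        simp only [consCode, List.cons.injEq] at h
        obtain ⟨hrr, hcc⟩ := h
        dsimp only at hr1 hr2 hr1' hr2'
        have hc0 : c0 = c0' := by
          apply Fin.ext
          rw [← hr2, ← hr2', hrr]
        have ha0 : a0 = a0' := by
          apply Fin.ext
          have heq2 : 1 + (n - 1) * (a0 : ℕ) = 1 + (n - 1) * (a0' : ℕ) := by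
            rw [← hr1, ← hr1', hrr]
          have hn1 : 0 < n - 1 := by omega
          exact Nat.eq_of_mul_eq_mul_left hn1 (by omega)
        subst hc0; subst ha0
        exact congrArg (Sigma.mk (c0, a0))
          (Prod.ext (Subtype.ext hrr) (Subtype.ext hcc))
      · rintro ⟨c, hc1, hc2, hc3, hc4⟩
        cases c with
        | nil => simp at hc1
        | cons r cs =>
          have hvr := hc2 r (by simp)
          have hlenr := validRow_len hn hvr
          have hc1' : cs.length = q := by simpa using hc1
          rw [sumT_cons] at hc3
          rw [sumA_cons] at hc4
          have hc0lt : r.count true < s + 1 := by omega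
          have ha0lt : (r.length - 1) / (n - 1) < p + 1 := by omega
          refine ⟨⟨⟨⟨r.count true, hc0lt⟩, ⟨(r.length - 1) / (n - 1), ha0lt⟩⟩,
            ⟨⟨r, hlenr, rfl⟩, ⟨cs, hc1', fun x hx => hc2 x (by simp [hx]), ?_, ?_⟩⟩⟩, ?_⟩
          · show sumT cs = s - r.count true
            omega
          · show sumA n cs = p - (r.length - 1) / (n - 1)
            omega
          · apply Subtype.ext
            rfl
    haveI : Finite (SigT n q s p) := by unfold SigT; infer_instance
    haveI : Finite (CodesT n (q + 1) s p) :=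
      Finite.of_equiv _ (Equiv.ofBijective _ hbij)
    refine ⟨inferInstance, ?_⟩
    rw [← Nat.card_congr (Equiv.ofBijective _ hbij)]
    rw [show Nat.card (SigT n q s p) = ∑ x : Fin (s + 1) × Fin (p + 1),
      Nat.card ({r : List Bool // r.length = 1 + (n - 1) * (x.2 : ℕ) ∧
        r.count true = (x.1 : ℕ)} × CodesT n q (s - x.1) (p - x.2)) from nat_card_sigma _]
    have hterm : ∀ x : Fin (s + 1) × Fin (p + 1),
        Nat.card ({r : List Bool // r.length = 1 + (n - 1) * (x.2 : ℕ) ∧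
            r.count true = (x.1 : ℕ)} × CodesT n q (s - x.1) (p - x.2)) =
          (1 + (n - 1) * (x.2 : ℕ)).choose (x.1 : ℕ) *
            (((p - x.2) + q - 1).choose (p - x.2) *
              (q + (n - 1) * (p - x.2)).choose (s - x.1)) := by
      intro x
      rw [Nat.card_prod, (card_row _ _).2, (ih _ _).2]
    rw [Finset.sum_congr rfl fun x _ => hterm x]
    -- now pure binomial arithmetic
    rw [Fintype.sum_prod_type]
    have hswap :
        ∑ c0 : Fin (s + 1), ∑ a0 : Fin (p + 1),
          (1 + (n - 1) * (a0 : ℕ)).choose (c0 : ℕ) *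
            (((p - a0) + q - 1).choose (p - a0) *
              (q + (n - 1) * (p - a0)).choose (s - c0)) =
        ∑ a0 ∈ Finset.range (p + 1), ∑ c0 ∈ Finset.range (s + 1),
          (((p - a0) + q - 1).choose (p - a0)) *
            ((1 + (n - 1) * a0).choose c0 * (q + (n - 1) * (p - a0)).choose (s - c0)) := by
      rw [Finset.sum_comm]
      rw [Fin.sum_univ_eq_sum_range
        (fun a0 => ∑ c0 : Fin (s + 1), (1 + (n - 1) * a0).choose (c0 : ℕ) *
          (((p - a0) + q - 1).choose (p - a0) * (q + (n - 1) * (p - a0)).choose (s - (c0 : ℕ))))]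
      refine Finset.sum_congr rfl fun a0 _ => ?_
      rw [Fin.sum_univ_eq_sum_range
        (fun c0 => (1 + (n - 1) * a0).choose c0 *
          (((p - a0) + q - 1).choose (p - a0) * (q + (n - 1) * (p - a0)).choose (s - c0)))]
      refine Finset.sum_congr rfl fun c0 _ => ?_
      ring
    rw [hswap]
    have hinner : ∀ a0 ∈ Finset.range (p + 1),
        ∑ c0 ∈ Finset.range (s + 1),
          (((p - a0) + q - 1).choose (p - a0)) *
            ((1 + (n - 1) * a0).choose c0 * (q + (n - 1) * (p - a0)).choose (s - c0)) =
        (((p - a0) + q - 1).choose (p - a0)) * ((q + 1) + (n - 1) * p).choose s := by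
      intro a0 ha0
      rw [← Finset.mul_sum, vandermonde_range]
      congr 2
      have ha0' : a0 ≤ p := by
        have := Finset.mem_range.mp ha0; omega
      have : (n - 1) * a0 + (n - 1) * (p - a0) = (n - 1) * p := by
        rw [← Nat.mul_add]
        congr 1
        omega
      omega
    rw [Finset.sum_congr rfl hinner, ← Finset.sum_mul]
    have houter : ∑ a0 ∈ Finset.range (p + 1), ((p - a0) + q - 1).choose (p - a0) =
        (p + (q + 1) - 1).choose p := by
      rw [show p + (q + 1) - 1 = p + q by omega]
      rw [← hockey q p]
      rw [← Finset.sum_range_reflect (fun j => (j + q - 1).choose j) (p + 1)]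
      refine Finset.sum_congr rfl fun a0 ha0 => ?_
      congr 1
    rw [houter]

end OpCount

namespace OpCount

theorem sumT_rotate (l : List (List Bool)) (i : ℕ) : sumT (l.rotate i) = sumT l :=
  List.Perm.sum_eq ((List.rotate_perm l i).map _)

theorem sumA_rotate (n : ℕ) (l : List (List Bool)) (i : ℕ) :
    sumA n (l.rotate i) = sumA n l :=
  List.Perm.sum_eq ((List.rotate_perm l i).map _)

theorem isF_facts {n : ℕ} {c : List (List Bool)} (h : IsF n 1 c) :
    (∀ r ∈ c, ValidRow n r) ∧ c.length = sumT c + 1 :=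
  ⟨((isF_iff c 1).1 h).1, ((isF_iff c 1).1 h).2.1⟩

/-- Codes of single trees with `m+1` rows and `a`-sum `p`. -/
def ValidT (n m p : ℕ) : Type :=
  {c : List (List Bool) // IsF n 1 c ∧ c.length = m + 1 ∧ sumA n c = p}

def monToCode {n w m : ℕ} (hwm : m ≤ w)
    (M : {M : OpMon n // M.weight = w ∧ M.mult = m}) : ValidT n m (w - m) :=
  ⟨M.1.code, M.1.code_isF_one, by
    have h1 := OpMon.code_length M.1
    have h2 := M.2.2
    omega, by
    have h1 := OpMon.code_sumA M.1
    have h2 := M.2.1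
    have h3 := M.2.2
    omega⟩

theorem monToCode_bij {n w m : ℕ} (hwm : m ≤ w) :
    Function.Bijective (monToCode (n := n) (w := w) (m := m) hwm) := by
  constructor
  · rintro ⟨M, hM⟩ ⟨M', hM'⟩ h
    have h2 := congrArg Subtype.val h
    simp only [monToCode] at h2
    apply Subtype.ext
    exact (OpMon.code_inj M M' [] [] (by simpa using h2)).1
  · rintro ⟨c, hF, hlen, hsA⟩
    obtain ⟨Ms, hMs1, hMs2⟩ := _root_.IsF.parse hF
    cases Ms with
    | nil => simp at hMs1
    | cons M Ms' =>
      cases Ms' with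
      | cons _ _ => simp at hMs1
      | nil =>
        have hcode : M.code = c := by simpa using hMs2
        have hmult : M.mult = m := by
          have := OpMon.code_length M
          rw [hcode] at this
          omega
        have hweight : M.weight = w := by
          have := OpMon.code_sumA M
          rw [hcode] at this
          omega
        exact ⟨⟨M, hweight, hmult⟩, Subtype.ext hcode⟩

def rotCode {n m p : ℕ} (x : ValidT n m p × Fin (m + 1)) : CodesT n (m + 1) m p :=
  ⟨x.1.1.rotate x.2, by
    obtain ⟨⟨c, hF, hlen, hsA⟩, i⟩ := x
    dsimp only
    obtain ⟨hval, hst⟩ := isF_facts hF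
    refine ⟨by simp [hlen], ?_, ?_, ?_⟩
    · intro r hr
      exact hval r ((List.rotate_perm c (i : ℕ)).mem_iff.mp hr)
    · rw [sumT_rotate]; omega
    · rw [sumA_rotate]; exact hsA⟩

theorem unrotate {m : ℕ} (d e : List (List Bool)) (hd : d.length = m + 1)
    (a : ℕ) (ha : a < m + 1) (hrot : d.rotate a = e) :
    e.rotate ((m + 1 - a) % (m + 1)) = d := by
  rw [← hrot, List.rotate_rotate]
  rcases Nat.eq_zero_or_pos a with rfl | h0
  · rw [show (0 + (m + 1 - 0) % (m + 1)) = 0 by simp [Nat.mod_self]]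
    simp
  · rw [Nat.mod_eq_of_lt (by omega), show a + (m + 1 - a) = m + 1 by omega, ← hd,
      List.rotate_length]

theorem rotCode_bij {n m p : ℕ} :
    Function.Bijective (rotCode (n := n) (m := m) (p := p)) := by
  have hmod : ∀ x : ℕ, x < m + 1 → (m + 1 - x) % (m + 1) = if x = 0 then 0 else m + 1 - x := by
    intro x hx
    split
    · subst ‹x = 0›; simp [Nat.mod_self]
    · exact Nat.mod_eq_of_lt (by omega)
  constructor
  · rintro ⟨⟨c, hF, hlen, hsA⟩, i⟩ ⟨⟨c', hF', hlen', hsA'⟩, i'⟩ heq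
    have h := congrArg Subtype.val heq
    simp only [rotCode] at h
    obtain ⟨hval, hst⟩ := isF_facts hF
    obtain ⟨hval', hst'⟩ := isF_facts hF'
    have hvale : ∀ r ∈ c.rotate (i : ℕ), ValidRow n r :=
      fun r hr => hval r ((List.rotate_perm c (i : ℕ)).mem_iff.mp hr)
    have hsTe : sumT (c.rotate (i : ℕ)) + 1 = (c.rotate (i : ℕ)).length := by
      rw [sumT_rotate, List.length_rotate]; omega
    obtain ⟨j, hj, hjuniq⟩ := cycle_lemma (c.rotate (i : ℕ)) hvale hsTe
    have hlen_e : (c.rotate (i : ℕ)).length = m + 1 := by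
      rw [List.length_rotate]; exact hlen
    have hc : (c.rotate (i : ℕ)).rotate ((m + 1 - (i : ℕ)) % (m + 1)) = c :=
      unrotate c _ hlen (i : ℕ) i.isLt rfl
    have hc' : (c.rotate (i : ℕ)).rotate ((m + 1 - (i' : ℕ)) % (m + 1)) = c' :=
      unrotate c' _ hlen' (i' : ℕ) i'.isLt h.symm
    have hj1 : (m + 1 - (i : ℕ)) % (m + 1) = j := by
      apply hjuniq
      constructor
      · rw [hlen_e]; exact Nat.mod_lt _ (by omega)
      · rw [hc]; exact hF
    have hj2 : (m + 1 - (i' : ℕ)) % (m + 1) = j := by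
      apply hjuniq
      constructor
      · rw [hlen_e]; exact Nat.mod_lt _ (by omega)
      · rw [hc']; exact hF'
    have hii : i = i' := by
      apply Fin.ext
      have h1 := hmod (i : ℕ) i.isLt
      have h2 := hmod (i' : ℕ) i'.isLt
      rw [h1] at hj1
      rw [h2] at hj2
      have hi := i.isLt
      have hi' := i'.isLt
      split_ifs at hj1 hj2 <;> omega
    have hcc : c = c' := by
      rw [← hc, ← hc', hj1, hj2]
    subst hii
    apply Prod.ext
    · apply Subtype.ext
      exact hcc
    · rfl
  · rintro ⟨d, hd1, hd2, hd3, hd4⟩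
    have hsT : sumT d + 1 = d.length := by omega
    obtain ⟨j, ⟨hjlt, hjF⟩, -⟩ := cycle_lemma d hd2 hsT
    have hjlt' : j < m + 1 := by omega
    refine ⟨⟨⟨d.rotate j, hjF, by simp [hd1], by rw [sumA_rotate]; exact hd4⟩,
      ⟨(m + 1 - j) % (m + 1), Nat.mod_lt _ (by omega)⟩⟩, ?_⟩
    apply Subtype.ext
    exact unrotate d (d.rotate j) hd1 j hjlt' rfl

end OpCount

open OpCount in
/-- For `n ≥ 2`, the set of `n`-ary operator monomials of weight `w` and multiplicity
`m` is finite, and its cardinality `N_n(w,m)` satisfies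
`(w+1) · N_n(w,m) = C(w+1, m+1) · C(w + (w-m)(n-2) + 1, m)`. -/
theorem stmt_11 (n : ℕ) (hn : 2 ≤ n) (w m : ℕ) :
    {M : OpMon n | M.weight = w ∧ M.mult = m}.Finite ∧
    (w + 1) * Nat.card {M : OpMon n | M.weight = w ∧ M.mult = m} =
      Nat.choose (w + 1) (m + 1) * Nat.choose (w + (w - m) * (n - 2) + 1) m := by
  by_cases hwm : m ≤ w
  · -- main case
    set p := w - m with hp
    obtain ⟨hfinC, hcardC⟩ := codesT_card hn (m + 1) m p
    have EV : ValidT n m p × Fin (m + 1) ≃ CodesT n (m + 1) m p :=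
      Equiv.ofBijective _ (rotCode_bij (n := n) (m := m) (p := p))
    haveI hfinVF : Finite (ValidT n m p × Fin (m + 1)) := Finite.of_equiv _ EV.symm
    haveI hfinV : Finite (ValidT n m p) :=
      Finite.of_injective (fun v => ((v, 0) : ValidT n m p × Fin (m + 1)))
        (fun a b h => (Prod.ext_iff.mp h).1)
    have EM : {M : OpMon n // M.weight = w ∧ M.mult = m} ≃ ValidT n m p :=
      Equiv.ofBijective _ (monToCode_bij (n := n) hwm)
    haveI hfinM : Finite {M : OpMon n // M.weight = w ∧ M.mult = m} :=
      Finite.of_equiv _ EM.symm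
    haveI hfinS : Finite ↥{M : OpMon n | M.weight = w ∧ M.mult = m} := hfinM
    refine ⟨Set.toFinite _, ?_⟩
    have hNs : Nat.card ↥{M : OpMon n | M.weight = w ∧ M.mult = m} =
        Nat.card (ValidT n m p) := Nat.card_congr EM
    rw [hNs]
    have hVF : Nat.card (ValidT n m p) * (m + 1) = Nat.card (CodesT n (m + 1) m p) := by
      rw [← Nat.card_congr EV, Nat.card_prod]
      simp [Nat.card_eq_fintype_card]
    have key : Nat.card (ValidT n m p) * (m + 1) =
        (p + m).choose p * ((m + 1) + (n - 1) * p).choose m := by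
      rw [hVF, hcardC, show p + (m + 1) - 1 = p + m by omega]
    have h1 : (p + m).choose p = w.choose m := by
      rw [show p + m = w by omega, show p = w - m from hp]
      exact Nat.choose_symm hwm
    have h2 : (m + 1) + (n - 1) * p = w + (w - m) * (n - 2) + 1 := by
      have hx : (n - 1) * p = (n - 2) * p + p := by
        have h : n - 1 = (n - 2) + 1 := by omega
        rw [h, Nat.succ_mul]
      have hy : (w - m) * (n - 2) = (n - 2) * p := by
        rw [hp, Nat.mul_comm]
      omega
    rw [h1, h2] at key
    apply Nat.eq_of_mul_eq_mul_right (show 0 < m + 1 by omega)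
    have hsucc : (w + 1) * w.choose m = (w + 1).choose (m + 1) * (m + 1) := by
      simpa [Nat.succ_eq_add_one] using Nat.add_one_mul_choose_eq w m
    calc (w + 1) * Nat.card (ValidT n m p) * (m + 1)
        = (w + 1) * (Nat.card (ValidT n m p) * (m + 1)) := by ring
      _ = (w + 1) * (w.choose m * (w + (w - m) * (n - 2) + 1).choose m) := by rw [key]
      _ = ((w + 1) * w.choose m) * (w + (w - m) * (n - 2) + 1).choose m := by ring
      _ = ((w + 1).choose (m + 1) * (m + 1)) * (w + (w - m) * (n - 2) + 1).choose m := by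
          rw [hsucc]
      _ = (w + 1).choose (m + 1) * (w + (w - m) * (n - 2) + 1).choose m * (m + 1) := by ring
  · -- degenerate case: no monomials since mult ≤ weight
    have hempty : {M : OpMon n | M.weight = w ∧ M.mult = m} = ∅ := by
      ext M
      simp only [Set.mem_setOf_eq, Set.mem_empty_iff_false, iff_false]
      rintro ⟨h1, h2⟩
      have := OpMon.mult_le_weight M
      omega
    rw [hempty]
    refine ⟨Set.finite_empty, ?_⟩
    rw [Nat.choose_eq_zero_of_lt (by omega : w + 1 < m + 1)]
    simp
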